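/- For d ∈ ℕ, d ≥ 2, the set S_d = {(a,b) ∈ ℝ² : x^{2d} + a x² + b ≥ 0 for all x ∈ ℝ} satisfies S_d = {(a,b) ∈ ℝ × ℝ_{≥0} : a + d^{1/d} · (d·b/(d−1))^{(d−1)/d} ≥ 0}. -/

import Mathlib

open Real

private lemma amgm_key {d : ℕ} (hd : 2 ≤ d) {t b : ℝ} (ht : 0 ≤ t) (hb : 0 ≤ b) :
    (d : ℝ) ^ ((1 : ℝ) / d) * ((d : ℝ) * b / ((d : ℝ) - 1)) ^ (((d : ℝ) - 1) / d) * t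
      ≤ t ^ d + b := by
  set D : ℝ := (d : ℝ) with hD
  have hD2 : (2 : ℝ) ≤ D := by show (2:ℝ) ≤ (d:ℝ); exact_mod_cast hd
  have hD0 : 0 < D := by linarith
  have hD1 : 0 < D - 1 := by linarith
  have hb2 : 0 ≤ D * b / (D - 1) := by positivity
  have key := Real.geom_mean_le_arith_mean2_weighted (w₁ := 1 / D) (w₂ := (D - 1) / D)
    (p₁ := D * t ^ d) (p₂ := D * b / (D - 1)) (by positivity) (by positivity)
    (by positivity) hb2 (by field_simp; ring)
  have h1 : (D * t ^ d) ^ ((1:ℝ) / D) = D ^ ((1:ℝ)/D) * t := by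
    rw [Real.mul_rpow hD0.le (by positivity)]
    congr 1
    rw [← Real.rpow_natCast t d, ← Real.rpow_mul ht]
    rw [show (d : ℝ) * (1 / D) = 1 by field_simp; exact hD.symm]
    exact Real.rpow_one t
  have h2 : (1 / D) * (D * t ^ d) + ((D - 1) / D) * (D * b / (D - 1)) = t ^ d + b := by
    field_simp
  rw [h1, h2] at key
  nlinarith [key]

theorem Sd_explicit_description (d : ℕ) (hd : 2 ≤ d) :
    {p : ℝ × ℝ | ∀ x : ℝ, 0 ≤ x ^ (2 * d) + p.1 * x ^ 2 + p.2}
      =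
    {p : ℝ × ℝ | 0 ≤ p.2 ∧
      0 ≤ p.1 + (d : ℝ) ^ ((1 : ℝ) / d) *
            ((d : ℝ) * p.2 / ((d : ℝ) - 1)) ^ (((d : ℝ) - 1) / d)} := by
  set D : ℝ := (d : ℝ) with hD
  have hD2 : (2 : ℝ) ≤ D := by show (2:ℝ) ≤ (d:ℝ); exact_mod_cast hd
  have hD0 : 0 < D := by linarith
  have hD1 : 0 < D - 1 := by linarith
  ext ⟨a, b⟩
  simp only [Set.mem_setOf_eq]
  constructor
  · intro h
    have hb : 0 ≤ b := by
      simpa [zero_pow (by omega : 2 * d ≠ 0)] using h 0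
    refine ⟨hb, ?_⟩
    rcases eq_or_lt_of_le hb with hb0 | hb0
    · -- b = 0; show 0 ≤ a
      have hL : D * b / (D - 1) = 0 := by rw [← hb0]; ring
      rw [hL, Real.zero_rpow (by positivity), mul_zero, add_zero]
      by_contra ha
      push_neg at ha
      set ε : ℝ := min (1/2) (-a/2) with hε
      have hε0 : 0 < ε := by
        apply lt_min <;> linarith
      have hε1 : ε ≤ 1 := le_trans (min_le_left _ _) (by norm_num)
      have hεa : ε ≤ -a/2 := min_le_right _ _
      have hx := h (Real.sqrt ε)
      rw [pow_mul, Real.sq_sqrt hε0.le, ← hb0, add_zero] at hx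
      have hpow : ε ^ d ≤ ε * ε := by
        calc ε ^ d ≤ ε ^ 2 := pow_le_pow_of_le_one hε0.le hε1 hd
        _ = ε * ε := sq ε
      nlinarith
    · -- b > 0
      set t : ℝ := (b / (D - 1)) ^ ((1:ℝ) / D) with htdef
      have ht0 : 0 < t := Real.rpow_pos_of_pos (by positivity) _
      have htd : t ^ d = b / (D - 1) := by
        rw [← Real.rpow_natCast t d, htdef, ← Real.rpow_mul (by positivity)]
        rw [show (1 / D) * (d : ℝ) = 1 by field_simp; exact hD.symm]
        exact Real.rpow_one _
      have heq : D ^ ((1:ℝ)/D) * (D * b / (D - 1)) ^ ((D - 1)/D) * t = t ^ d + b := by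
        have e1 : (D * b / (D - 1)) ^ ((D - 1)/D)
            = D ^ ((D-1)/D) * (b / (D - 1)) ^ ((D-1)/D) := by
          rw [← Real.mul_rpow hD0.le (by positivity)]
          congr 1
          ring
        rw [e1, htdef]
        rw [show D ^ ((1:ℝ)/D) * (D ^ ((D-1)/D) * (b / (D - 1)) ^ ((D-1)/D)) *
              (b / (D - 1)) ^ ((1:ℝ) / D)
            = (D ^ ((1:ℝ)/D) * D ^ ((D-1)/D)) *
              ((b / (D - 1)) ^ ((D-1)/D) * (b / (D - 1)) ^ ((1:ℝ) / D)) by ring]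
        rw [← Real.rpow_add hD0, ← Real.rpow_add (by positivity)]
        rw [show (1:ℝ)/D + (D-1)/D = 1 by field_simp; ring, show (D-1)/D + 1/D = 1 by field_simp; ring]
        rw [Real.rpow_one, Real.rpow_one, htd]
        field_simp
        ring
      have hx := h (Real.sqrt t)
      rw [pow_mul, Real.sq_sqrt ht0.le] at hx
      -- hx : 0 ≤ (t^d) + a * t + b   (with (sqrt t)^2 = t)
      have : 0 ≤ (a + D ^ ((1:ℝ)/D) * (D * b / (D - 1)) ^ ((D - 1)/D)) * t := by
        nlinarith [hx, heq]
      by_contra hc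
      push_neg at hc
      nlinarith [mul_pos (neg_pos.mpr hc) ht0]
  · rintro ⟨hb, ha⟩ x
    have ht : (0:ℝ) ≤ x ^ 2 := sq_nonneg x
    have key := amgm_key hd ht hb
    have hx2d : x ^ (2 * d) = (x ^ 2) ^ d := by rw [← pow_mul]
    nlinarith [key, mul_le_mul_of_nonneg_right ha ht]
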